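/- Let 𝓕 ⊂ ℤ³∖{0} be a family of vectors of finite cardinality and let d > 0. Then there exists η = η(𝓕,d) > 0 with the following property: for any two families of closed geodesics {s_f}_{f∈𝓕} = {l_{f,p_f}}_{f∈𝓕} and {s̃_f}_{f∈𝓕} = {l_{f,q_f}}_{f∈𝓕} satisfying dist(s_f, s_g) ≥ 2d and dist(s̃_f, s̃_g) ≥ 2d for all f ≠ g in 𝓕, one can find z ∈ ℝ³ with |z| ≤ d/4 such that the shifted geodesics s̄_f := l_{f, q_f + z} satisfy min{dist(s_f, s̄_g) : f, g ∈ 𝓕} ≥ η. -/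

import Mathlib

open Real

noncomputable section

abbrev V3 : Type := Fin 3 → ℝ

def enorm3 (x : V3) : ℝ := Real.sqrt (∑ i, (x i)^2)

def geo (f : Fin 3 → ℤ) (p : V3) : Set V3 :=
  {y | ∃ (σ : ℝ) (m : Fin 3 → ℤ), y = (σ • fun i => (f i : ℝ)) + p + fun i => 2 * π * (m i : ℝ)}

/-! ### helpers -/

def dotZ (n f : Fin 3 → ℤ) : ℤ := n 0 * f 0 + n 1 * f 1 + n 2 * f 2

def dotR (n : Fin 3 → ℤ) (v : V3) : ℝ := n 0 * v 0 + n 1 * v 1 + n 2 * v 2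

def crossZ (f g : Fin 3 → ℤ) : Fin 3 → ℤ :=
  ![f 1 * g 2 - f 2 * g 1, f 2 * g 0 - f 0 * g 2, f 0 * g 1 - f 1 * g 0]

def perp (f g : Fin 3 → ℤ) : Fin 3 → ℤ :=
  if crossZ f g ≠ 0 then crossZ f g
  else if f 0 = 0 ∧ f 1 = 0 then ![0, f 2, -f 1] else ![f 1, -f 0, 0]

lemma vec_ne_zero_iff (n : Fin 3 → ℤ) : n ≠ 0 ↔ n 0 ≠ 0 ∨ n 1 ≠ 0 ∨ n 2 ≠ 0 := by
  constructor
  · intro h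
    by_contra hc
    push_neg at hc
    exact h (by funext i; fin_cases i <;> simp [hc.1, hc.2.1, hc.2.2])
  · rintro (h | h | h) he <;> simp [he] at h

lemma perp_ne_zero (f g : Fin 3 → ℤ) (hf : f ≠ 0) : perp f g ≠ 0 := by
  unfold perp
  split_ifs with h1 h2
  · exact h1
  · rw [vec_ne_zero_iff]
    right; left
    simp only [Matrix.cons_val_one, Matrix.head_cons]
    rcases (vec_ne_zero_iff f).mp hf with h | h | h
    · exact absurd h2.1 h
    · exact absurd h2.2 h
    · exact h
  · rw [vec_ne_zero_iff]
    rcases not_and_or.mp h2 with h | h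
    · right; left; simpa using neg_ne_zero.mpr h
    · left; simpa using h

lemma perp_dot_left (f g : Fin 3 → ℤ) : dotZ (perp f g) f = 0 := by
  unfold perp
  split_ifs with h1 h2
  · simp [dotZ, crossZ]; ring
  · simp [dotZ]; ring
  · simp [dotZ]; ring

lemma perp_dot_right (f g : Fin 3 → ℤ) : dotZ (perp f g) g = 0 := by
  unfold perp
  split_ifs with h1 h2
  · simp [dotZ, crossZ]; ring
  · push_neg at h1
    have h0 := congrFun h1 0
    simp only [crossZ, Matrix.cons_val_zero, Pi.zero_apply] at h0
    simp only [dotZ, Matrix.cons_val_zero, Matrix.cons_val_one, Matrix.head_cons,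
      Matrix.cons_val_two, Matrix.tail_cons]
    linarith [h0]
  · push_neg at h1
    have h2' := congrFun h1 2
    simp only [crossZ, Matrix.cons_val_two, Matrix.tail_cons, Matrix.head_cons,
      Pi.zero_apply] at h2'
    simp only [dotZ, Matrix.cons_val_zero, Matrix.cons_val_one, Matrix.head_cons,
      Matrix.cons_val_two, Matrix.tail_cons]
    linarith [h2']

lemma enorm3_eq (x : V3) : enorm3 x = Real.sqrt (x 0 ^ 2 + x 1 ^ 2 + x 2 ^ 2) := by
  simp [enorm3, Fin.sum_univ_three]

lemma enorm3_nonneg (x : V3) : 0 ≤ enorm3 x := Real.sqrt_nonneg _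

def enormZ (n : Fin 3 → ℤ) : ℝ := enorm3 (fun i => (n i : ℝ))

lemma enormZ_pos (n : Fin 3 → ℤ) (hn : n ≠ 0) : 0 < enormZ n := by
  rw [enormZ, enorm3_eq]
  apply Real.sqrt_pos.mpr
  have s0 := sq_nonneg ((n 0 : ℤ):ℝ)
  have s1 := sq_nonneg ((n 1 : ℤ):ℝ)
  have s2 := sq_nonneg ((n 2 : ℤ):ℝ)
  rcases (vec_ne_zero_iff n).mp hn with h | h | h
  · have : (0:ℝ) < ((n 0 : ℤ) : ℝ)^2 := by positivity
    nlinarith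
  · have : (0:ℝ) < ((n 1 : ℤ) : ℝ)^2 := by positivity
    nlinarith
  · have : (0:ℝ) < ((n 2 : ℤ) : ℝ)^2 := by positivity
    nlinarith

lemma abs_dotR_le (n : Fin 3 → ℤ) (v : V3) : |dotR n v| ≤ enormZ n * enorm3 v := by
  rw [enormZ, enorm3_eq, enorm3_eq]
  have h1 : |dotR n v| = Real.sqrt ((dotR n v)^2) := (Real.sqrt_sq_eq_abs _).symm
  rw [h1, ← Real.sqrt_mul (by positivity)]
  apply Real.sqrt_le_sqrt
  simp only [dotR]
  nlinarith [sq_nonneg ((n 0:ℝ) * v 1 - (n 1:ℝ) * v 0), sq_nonneg ((n 0:ℝ) * v 2 - (n 2:ℝ) * v 0),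
    sq_nonneg ((n 1:ℝ) * v 2 - (n 2:ℝ) * v 1)]

lemma enorm3_smul (t : ℝ) (ht : 0 ≤ t) (e : V3) : enorm3 (t • e) = t * enorm3 e := by
  rw [enorm3_eq, enorm3_eq]
  simp only [Pi.smul_apply, smul_eq_mul]
  rw [show (t * e 0)^2 + (t * e 1)^2 + (t * e 2)^2 = t^2 * (e 0^2 + e 1^2 + e 2^2) by ring,
    Real.sqrt_mul (sq_nonneg t), Real.sqrt_sq ht]

lemma dotR_add (n : Fin 3 → ℤ) (v w : V3) : dotR n (v + w) = dotR n v + dotR n w := by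
  simp [dotR, Pi.add_apply]; ring

lemma dotR_smul (n : Fin 3 → ℤ) (t : ℝ) (v : V3) : dotR n (t • v) = t * dotR n v := by
  simp [dotR, Pi.smul_apply, smul_eq_mul]; ring

lemma dot_key (n f g : Fin 3 → ℤ) (hf : dotZ n f = 0) (hg : dotZ n g = 0)
    (w u : V3) (σ τ : ℝ) (m m' : Fin 3 → ℤ) :
    dotR n (((σ • fun i => (f i : ℝ)) + w + fun i => 2*π*(m i:ℝ))
      - ((τ • fun i => (g i : ℝ)) + u + fun i => 2*π*(m' i:ℝ)))
      = dotR n w - dotR n u + 2*π*((dotZ n m - dotZ n m' : ℤ) : ℝ) := by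
  have hf' : (n 0:ℝ)*(f 0:ℤ) + (n 1:ℝ)*(f 1:ℤ) + (n 2:ℝ)*(f 2:ℤ) = 0 := by exact_mod_cast hf
  have hg' : (n 0:ℝ)*(g 0:ℤ) + (n 1:ℝ)*(g 1:ℤ) + (n 2:ℝ)*(g 2:ℤ) = 0 := by exact_mod_cast hg
  simp only [dotR, dotZ, Pi.add_apply, Pi.sub_apply, Pi.smul_apply, smul_eq_mul]
  push_cast
  linear_combination σ * hf' - τ * hg'

lemma exists_beta (P : Finset (Fin 3 → ℤ)) (hP : ∀ n ∈ P, n ≠ 0) :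
    ∃ β : ℝ, ∀ n ∈ P, (n 0:ℝ) + (n 1:ℝ) * β + (n 2:ℝ) * β^2 ≠ 0 := by
  classical
  have hfin : ∀ n ∈ P, {β : ℝ | (n 0:ℝ) + (n 1:ℝ) * β + (n 2:ℝ) * β^2 = 0}.Finite := by
    intro n hn
    set q : Polynomial ℝ := Polynomial.C (n 0:ℝ) + Polynomial.C (n 1:ℝ) * Polynomial.X
      + Polynomial.C (n 2:ℝ) * Polynomial.X^2 with hq
    have hq0 : q ≠ 0 := by
      intro h
      apply hP n hn
      have d0 : n 0 = 0 := by
        have hco := congrArg (fun p => Polynomial.coeff p 0) h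
        simp only [hq, Polynomial.coeff_add, Polynomial.coeff_C, Polynomial.coeff_C_mul,
          Polynomial.coeff_X_pow, Polynomial.coeff_X, Polynomial.coeff_zero] at hco
        norm_num at hco
        exact hco
      have d1 : n 1 = 0 := by
        have hco := congrArg (fun p => Polynomial.coeff p 1) h
        simp only [hq, Polynomial.coeff_add, Polynomial.coeff_C, Polynomial.coeff_C_mul,
          Polynomial.coeff_X_pow, Polynomial.coeff_X, Polynomial.coeff_zero] at hco
        norm_num at hco
        exact hco
      have d2 : n 2 = 0 := by
        have hco := congrArg (fun p => Polynomial.coeff p 2) h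
        simp only [hq, Polynomial.coeff_add, Polynomial.coeff_C, Polynomial.coeff_C_mul,
          Polynomial.coeff_X_pow, Polynomial.coeff_X, Polynomial.coeff_zero] at hco
        norm_num at hco
        exact hco
      funext i
      fin_cases i <;> simp [d0, d1, d2]
    have := Polynomial.finite_setOf_isRoot hq0
    apply this.subset
    intro β hβ
    simp only [Set.mem_setOf_eq] at hβ ⊢
    simp only [Polynomial.IsRoot, hq, Polynomial.eval_add, Polynomial.eval_mul,
      Polynomial.eval_pow, Polynomial.eval_C, Polynomial.eval_X]
    linarith [hβ]
  have hbad : (⋃ n ∈ P, {β : ℝ | (n 0:ℝ) + (n 1:ℝ) * β + (n 2:ℝ) * β^2 = 0}).Finite :=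
    Set.Finite.biUnion P.finite_toSet hfin
  obtain ⟨β, hβ⟩ := hbad.infinite_compl.nonempty
  refine ⟨β, fun n hn h => ?_⟩
  exact hβ (Set.mem_biUnion hn h)



open MeasureTheory Set

lemma two_pi_big : (1:ℝ) ≤ 2 * π := by nlinarith [Real.pi_gt_three]

lemma measure_bad_le (a c T η' : ℝ) (ha : a ≠ 0) (hT : 0 < T) (hη : 0 < η') (hsm : η' ≤ |a|) :
    volume {t | t ∈ Icc 0 T ∧ ∃ k : ℤ, |a * t - c - 2*π*k| < η'}
      ≤ ENNReal.ofReal ((|a| *(T+2)+1) * (2*(η'/|a|))) := by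
  have hapos : 0 < |a| := abs_pos.mpr ha
  have hπ : 0 < 2*π := by positivity
  set r : ℝ := η'/|a| with hr
  have hrpos : 0 < r := by positivity
  set lo : ℝ := (min 0 (a*T) - c - η') / (2*π) with hlo
  set hi : ℝ := (max 0 (a*T) - c + η') / (2*π) with hhi
  set K : Finset ℤ := Finset.Icc ⌈lo⌉ ⌊hi⌋ with hK
  have hcover : {t | t ∈ Icc 0 T ∧ ∃ k : ℤ, |a * t - c - 2*π*k| < η'}
      ⊆ ⋃ k ∈ K, Metric.ball ((c + 2*π*k)/a) r := by
    rintro t ⟨⟨ht0, htT⟩, k, hk⟩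
    have hat : min 0 (a*T) ≤ a*t ∧ a*t ≤ max 0 (a*T) := by
      rcases le_or_gt 0 a with h | h
      · constructor
        · exact le_trans (min_le_left _ _) (by positivity)
        · exact le_trans (by nlinarith) (le_max_right _ _)
      · constructor
        · exact le_trans (min_le_right _ _) (by nlinarith)
        · exact le_trans (by nlinarith) (le_max_left _ _)
    have habs := abs_lt.mp hk
    have hkmem : k ∈ K := by
      rw [hK, Finset.mem_Icc]
      constructor
      · apply Int.ceil_le.mpr
        rw [hlo, div_le_iff₀ hπ]
        nlinarith [habs.2, hat.1]
      · apply Int.le_floor.mpr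
        rw [hhi, le_div_iff₀ hπ]
        nlinarith [habs.1, hat.2]
    refine Set.mem_biUnion hkmem ?_
    rw [Metric.mem_ball, Real.dist_eq]
    have : t - (c + 2*π*k)/a = (a*t - c - 2*π*k)/a := by field_simp; ring
    rw [this, abs_div]
    rw [hr]
    exact (div_lt_div_iff_of_pos_right hapos).mpr hk
  calc volume {t | t ∈ Icc 0 T ∧ ∃ k : ℤ, |a * t - c - 2*π*k| < η'}
      ≤ volume (⋃ k ∈ K, Metric.ball ((c + 2*π*k)/a) r) := measure_mono hcover
    _ ≤ ∑ k ∈ K, volume (Metric.ball ((c + 2*π*k)/a) r) := measure_biUnion_finset_le _ _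
    _ = K.card • ENNReal.ofReal (2*r) := by
        simp [Real.volume_ball]
    _ ≤ ENNReal.ofReal ((|a| *(T+2)+1) * (2*r)) := by
        rw [nsmul_eq_mul, ← ENNReal.ofReal_natCast, ← ENNReal.ofReal_mul (by positivity)]
        apply ENNReal.ofReal_le_ofReal
        have hmm : max 0 (a*T) - min 0 (a*T) = |a| * T := by
          rcases le_total 0 (a*T) with h | h
          · rw [max_eq_right h, min_eq_left h, sub_zero, ← abs_of_nonneg h, abs_mul,
              abs_of_pos hT]
          · rw [max_eq_left h, min_eq_right h, zero_sub, ← abs_of_nonpos h, abs_mul,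
              abs_of_pos hT]
        have hdiff : hi - lo ≤ |a| * (T+2) := by
          rw [hhi, hlo, div_sub_div_same]
          have hnum : (max 0 (a*T) - c + η') - (min 0 (a*T) - c - η') = |a| * T + 2*η' := by
            linear_combination hmm
          calc (max 0 (a*T) - c + η' - (min 0 (a*T) - c - η'))/(2*π)
              = (|a| * T + 2*η')/(2*π) := by rw [hnum]
            _ ≤ |a| * T + 2*η' := div_le_self (by positivity) two_pi_big
            _ ≤ |a| * (T+2) := by nlinarith [hsm]
        have hcard : (K.card : ℝ) ≤ |a| * (T+2)+1 := by
          rcases le_or_gt ⌈lo⌉ ⌊hi⌋ with h | h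
          · rw [hK, Int.card_Icc]
            have hnn : (0:ℤ) ≤ ⌊hi⌋ + 1 - ⌈lo⌉ := by omega
            have hcast : (((⌊hi⌋ + 1 - ⌈lo⌉).toNat : ℕ) : ℝ) = ((⌊hi⌋:ℝ) + 1 - (⌈lo⌉:ℝ)) := by
              have := Int.toNat_of_nonneg hnn
              exact_mod_cast congrArg (fun x : ℤ => (x : ℝ)) this
            rw [hcast]
            have h1 := Int.floor_le hi
            have h2 := Int.le_ceil lo
            linarith
          · rw [hK, Finset.Icc_eq_empty (not_le.mpr h)]
            simp only [Finset.card_empty, Nat.cast_zero]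
            positivity
        nlinarith [hrpos]

lemma exists_avoid {ι : Type*} (P : Finset ι) (hP : P.Nonempty) (a c : ι → ℝ)
    (ha : ∀ i ∈ P, a i ≠ 0) (T η' : ℝ) (hT : 0 < T) (hη : 0 < η')
    (hsm : ∀ i ∈ P, η' ≤ |a i|)
    (hsum : ∀ i ∈ P, (|a i| * (T+2)+1) * (2*(η'/|a i|)) ≤ T/(4*P.card)) :
    ∃ t, 0 ≤ t ∧ t ≤ T ∧ ∀ i ∈ P, ∀ k : ℤ, η' ≤ |a i * t - c i - 2*π*k| := by
  by_contra hcon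
  push_neg at hcon
  have hsub : Icc 0 T ⊆
      ⋃ i ∈ P, {t | t ∈ Icc 0 T ∧ ∃ k : ℤ, |a i * t - c i - 2*π*k| < η'} := by
    intro t ht
    obtain ⟨i, hi, k, hk⟩ := hcon t ht.1 ht.2
    exact Set.mem_biUnion hi ⟨ht, k, hk⟩
  have hN0 : ((P.card : ℝ)) ≠ 0 := by
    have := Finset.card_pos.mpr hP
    positivity
  have hle : ENNReal.ofReal T ≤ ENNReal.ofReal (T/4) := by
    calc ENNReal.ofReal T = volume (Icc (0:ℝ) T) := by rw [Real.volume_Icc, sub_zero]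
      _ ≤ volume (⋃ i ∈ P, {t | t ∈ Icc 0 T ∧ ∃ k : ℤ, |a i * t - c i - 2*π*k| < η'}) :=
          measure_mono hsub
      _ ≤ ∑ i ∈ P, volume {t | t ∈ Icc 0 T ∧ ∃ k : ℤ, |a i * t - c i - 2*π*k| < η'} :=
          measure_biUnion_finset_le _ _
      _ ≤ ∑ i ∈ P, ENNReal.ofReal ((|a i| * (T+2)+1) * (2*(η'/|a i|))) :=
          Finset.sum_le_sum fun i hi => measure_bad_le _ _ _ _ (ha i hi) hT hη (hsm i hi)
      _ ≤ ∑ i ∈ P, ENNReal.ofReal (T/(4*P.card)) :=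
          Finset.sum_le_sum fun i hi => ENNReal.ofReal_le_ofReal (hsum i hi)
      _ = P.card • ENNReal.ofReal (T/(4*P.card)) := Finset.sum_const _
      _ = ENNReal.ofReal (T/4) := by
          rw [nsmul_eq_mul, ← ENNReal.ofReal_natCast, ← ENNReal.ofReal_mul (by positivity)]
          congr 1
          field_simp
  have := (ENNReal.ofReal_le_ofReal_iff (by positivity)).mp hle
  linarith


theorem geodesic_shift_lemma
    (F : Finset (Fin 3 → ℤ)) (h0 : (0 : Fin 3 → ℤ) ∉ F) (d : ℝ) (hd : 0 < d) :
    ∃ η : ℝ, 0 < η ∧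
      ∀ p q : (Fin 3 → ℤ) → V3,
        (∀ f ∈ F, ∀ g ∈ F, f ≠ g →
          ∀ x ∈ geo f (p f), ∀ y ∈ geo g (p g), 2 * d ≤ enorm3 (x - y)) →
        (∀ f ∈ F, ∀ g ∈ F, f ≠ g →
          ∀ x ∈ geo f (q f), ∀ y ∈ geo g (q g), 2 * d ≤ enorm3 (x - y)) →
        ∃ z : V3, enorm3 z ≤ d / 4 ∧
          ∀ f ∈ F, ∀ g ∈ F,
            ∀ x ∈ geo f (p f), ∀ y ∈ geo g (q g + z), η ≤ enorm3 (x - y) := by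
  classical
  rcases F.eq_empty_or_nonempty with hF | hF
  · subst hF
    refine ⟨1, one_pos, fun p q _ _ => ⟨0, ?_, by simp⟩⟩
    have hz : enorm3 (0 : V3) = 0 := by simp [enorm3]
    rw [hz]; positivity
  · set P : Finset ((Fin 3 → ℤ) × (Fin 3 → ℤ)) := F ×ˢ F with hPdef
    have hPne : P.Nonempty := hF.product hF
    have hne1 : ∀ i ∈ P, i.1 ≠ 0 := fun i hi =>
      ne_of_mem_of_not_mem (Finset.mem_product.mp hi).1 h0
    set n : (Fin 3 → ℤ) × (Fin 3 → ℤ) → Fin 3 → ℤ := fun i => perp i.1 i.2 with hn_def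
    have hnne : ∀ i ∈ P, n i ≠ 0 := fun i hi => perp_ne_zero _ _ (hne1 i hi)
    obtain ⟨β, hβ⟩ := exists_beta (P.image n) (by
      rintro m hm
      obtain ⟨i, hi, rfl⟩ := Finset.mem_image.mp hm
      exact hnne i hi)
    set e : V3 := ![1, β, β^2] with he_def
    have hdote : ∀ i, dotR (n i) e = (n i 0 : ℝ) + (n i 1 : ℝ) * β + (n i 2 : ℝ) * β^2 := by
      intro i
      simp [dotR, he_def]
    have hae : ∀ i ∈ P, dotR (n i) e ≠ 0 := fun i hi => by
      rw [hdote i]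
      exact hβ (n i) (Finset.mem_image_of_mem n hi)
    set a : (Fin 3 → ℤ) × (Fin 3 → ℤ) → ℝ := fun i => dotR (n i) e with ha_def
    have hEe : 0 < enorm3 e := by
      rw [enorm3_eq]
      have h1 : e 0 = 1 := rfl
      rw [h1]
      apply Real.sqrt_pos.mpr
      nlinarith [sq_nonneg (e 1), sq_nonneg (e 2)]
    set T : ℝ := d / (4 * enorm3 e) with hT_def
    have hT : 0 < T := by positivity
    have hNpos : (0:ℝ) < P.card := by
      have := Finset.card_pos.mpr hPne
      exact_mod_cast this
    set η' : ℝ := P.inf' hPne fun i =>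
      min |a i| (T * |a i| / (8 * P.card * (|a i| * (T+2) + 1))) with hη'_def
    have hη'pos : 0 < η' := by
      rw [hη'_def]
      apply (Finset.lt_inf'_iff hPne).mpr
      intro i hi
      have hap : 0 < |a i| := abs_pos.mpr (hae i hi)
      apply lt_min hap
      positivity
    have hη'le : ∀ i ∈ P, η' ≤ |a i| := fun i hi =>
      le_trans (Finset.inf'_le _ hi) (min_le_left _ _)
    have hη'le2 : ∀ i ∈ P, η' ≤ T * |a i| / (8 * P.card * (|a i| * (T+2) + 1)) := fun i hi =>
      le_trans (Finset.inf'_le _ hi) (min_le_right _ _)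
    set C : ℝ := 1 + ∑ i ∈ P, enormZ (n i) with hC_def
    have hsumnn : 0 ≤ ∑ i ∈ P, enormZ (n i) :=
      Finset.sum_nonneg fun i _ => Real.sqrt_nonneg _
    have hC : 0 < C := by rw [hC_def]; linarith
    have hCle : ∀ i ∈ P, enormZ (n i) ≤ C := fun i hi => by
      have h1 : enormZ (n i) ≤ ∑ j ∈ P, enormZ (n j) :=
        Finset.single_le_sum (f := fun j => enormZ (n j)) (fun j _ => Real.sqrt_nonneg _) hi
      rw [hC_def]; linarith
    refine ⟨η' / C, div_pos hη'pos hC, ?_⟩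
    intro p q _ _
    set c : (Fin 3 → ℤ) × (Fin 3 → ℤ) → ℝ :=
      fun i => dotR (n i) (p i.1) - dotR (n i) (q i.2) with hc_def
    have hsum : ∀ i ∈ P, (|a i| * (T+2)+1) * (2*(η'/|a i|)) ≤ T/(4*P.card) := by
      intro i hi
      have hap : 0 < |a i| := abs_pos.mpr (hae i hi)
      have h2 := hη'le2 i hi
      have hG : (0:ℝ) < |a i| * (T+2) + 1 := by positivity
      calc (|a i| * (T+2)+1) * (2*(η'/|a i|))
          ≤ (|a i| * (T+2)+1) * (2*((T * |a i| / (8 * P.card * (|a i| * (T+2) + 1)))/|a i|)) := by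
            gcongr
        _ = T/(4*P.card) := by
            field_simp
            ring
    obtain ⟨t, ht0, htT, hgood⟩ := exists_avoid P hPne a c hae T η' hT hη'pos hη'le hsum
    refine ⟨t • e, ?_, ?_⟩
    · rw [enorm3_smul t ht0 e]
      calc t * enorm3 e ≤ T * enorm3 e := by gcongr
        _ = d / 4 := by
            rw [hT_def]
            field_simp
    · intro f hf g hg x hx y hy
      obtain ⟨σ, m, rfl⟩ := hx
      obtain ⟨τ, m', rfl⟩ := hy
      have hiP : (f, g) ∈ P := Finset.mem_product.mpr ⟨hf, hg⟩
      have hdl : dotZ (n (f, g)) f = 0 := perp_dot_left f g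
      have hdr : dotZ (n (f, g)) g = 0 := perp_dot_right f g
      have hdot := dot_key (n (f, g)) f g hdl hdr (p f) (q g + t • e) σ τ m m'
      have hqz : dotR (n (f, g)) (q g + t • e) = dotR (n (f, g)) (q g) + t * a (f, g) := by
        rw [dotR_add, dotR_smul, ha_def]
      set K : ℤ := dotZ (n (f, g)) m - dotZ (n (f, g)) m' with hK_def
      have key : η' ≤ |dotR (n (f, g))
          (((σ • fun i => (f i : ℝ)) + p f + fun i => 2*π*(m i:ℝ))
            - ((τ • fun i => (g i : ℝ)) + (q g + t • e) + fun i => 2*π*(m' i:ℝ)))| := by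
        rw [hdot, hqz]
        have h1 := hgood (f, g) hiP K
        have h2 : dotR (n (f, g)) (p f) - (dotR (n (f, g)) (q g) + t * a (f, g))
            + 2*π*((K:ℤ):ℝ) = -(a (f, g) * t - c (f, g) - 2*π*(K:ℝ)) := by
          rw [hc_def]
          push_cast
          ring
        rw [hK_def] at h2 ⊢
        rw [h2, abs_neg]
        exact h1
      have hcs := abs_dotR_le (n (f, g))
          ((((σ • fun i => (f i : ℝ)) + p f + fun i => 2*π*(m i:ℝ)))
            - ((τ • fun i => (g i : ℝ)) + (q g + t • e) + fun i => 2*π*(m' i:ℝ)))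
      have hnpos := enormZ_pos (n (f, g)) (hnne (f, g) hiP)
      have hCn := hCle (f, g) hiP
      calc η' / C ≤ η' / enormZ (n (f, g)) := by gcongr
        _ ≤ |dotR (n (f, g))
            ((((σ • fun i => (f i : ℝ)) + p f + fun i => 2*π*(m i:ℝ)))
              - ((τ • fun i => (g i : ℝ)) + (q g + t • e) + fun i => 2*π*(m' i:ℝ)))|
            / enormZ (n (f, g)) := by gcongr
        _ ≤ enorm3 ((((σ • fun i => (f i : ℝ)) + p f + fun i => 2*π*(m i:ℝ)))
              - ((τ • fun i => (g i : ℝ)) + (q g + t • e) + fun i => 2*π*(m' i:ℝ))) := by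
            rw [div_le_iff₀ hnpos]
            linarith [hcs]
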